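/- For every integer n ≥ 2 and every τ in the complex upper half-plane ℍ, the functions x_n satisfy the recursion x_{n-1}(τ)² · x_n(τ) = x_n(τ)² + 4 (the squared form of x_{n-1} = √((x_n²+4)/x_n)). -/

import Mathlib

open Complex Filter Topology

/-- Jacobi theta function θ₂(τ) = ∑_{n∈ℤ} exp(πiτ(n+1/2)²). -/
noncomputable def θ₂ (τ : ℂ) : ℂ :=
  ∑' n : ℤ, Complex.exp (Real.pi * Complex.I * τ * ((n : ℂ) + 1/2)^2)

/-- Jacobi theta function θ₃(τ) = ∑_{n∈ℤ} exp(πiτn²). -/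
noncomputable def θ₃ (τ : ℂ) : ℂ :=
  ∑' n : ℤ, Complex.exp (Real.pi * Complex.I * τ * (n : ℂ)^2)

/-- x_n(τ) = 2θ₃(2^{n-1}τ)/θ₂(2^{n-1}τ). -/
noncomputable def xfun (n : ℕ) (τ : ℂ) : ℂ :=
  2 * θ₃ (2^(n-1) * τ) / θ₂ (2^(n-1) * τ)

/-- y_n(τ) = θ₂(8τ)/θ₂(2^{n-1}τ). -/
noncomputable def yfun (n : ℕ) (τ : ℂ) : ℂ :=
  θ₂ (8 * τ) / θ₂ (2^(n-1) * τ)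

noncomputable section ThetaAux

/-- term of θ₂ -/
def T2 (τ : ℂ) (n : ℤ) : ℂ :=
  Complex.exp (Real.pi * Complex.I * τ * ((n : ℂ) + 1/2)^2)

/-- term of θ₃ -/
def T3 (τ : ℂ) (n : ℤ) : ℂ :=
  Complex.exp (Real.pi * Complex.I * τ * (n : ℂ)^2)

/-- term of θ₄ -/
def T4 (τ : ℂ) (n : ℤ) : ℂ :=
  Complex.exp (Real.pi * Complex.I * τ * (n : ℂ)^2 + Real.pi * Complex.I * (n : ℂ))

/-- term of an auxiliary series summing to zero -/
def TS (τ : ℂ) (n : ℤ) : ℂ :=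
  Complex.exp (Real.pi * Complex.I * τ * ((n : ℂ) + 1/2)^2 + Real.pi * Complex.I * (n : ℂ))

/-- θ₄ -/
def θ₄ (τ : ℂ) : ℂ := ∑' n : ℤ, T4 τ n

lemma T2_eq (τ : ℂ) (n : ℤ) :
    T2 τ n = Complex.exp (Real.pi * Complex.I * τ / 4) * jacobiTheta₂_term n (τ/2) τ := by
  rw [T2, jacobiTheta₂_term, ← Complex.exp_add]; congr 1; push_cast; ring

lemma T3_eq (τ : ℂ) (n : ℤ) : T3 τ n = jacobiTheta₂_term n 0 τ := by
  rw [T3, jacobiTheta₂_term]; congr 1; push_cast; ring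

lemma T4_eq (τ : ℂ) (n : ℤ) : T4 τ n = jacobiTheta₂_term n (1/2) τ := by
  rw [T4, jacobiTheta₂_term]; congr 1; push_cast; ring

lemma TS_eq (τ : ℂ) (n : ℤ) :
    TS τ n = Complex.exp (Real.pi * Complex.I * τ / 4) * jacobiTheta₂_term n ((τ+1)/2) τ := by
  rw [TS, jacobiTheta₂_term, ← Complex.exp_add]; congr 1; push_cast; ring

lemma summable_T2 {τ : ℂ} (hτ : 0 < τ.im) : Summable (T2 τ) :=
  (((summable_jacobiTheta₂_term_iff (τ/2) τ).mpr hτ).mul_left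
    (Complex.exp (Real.pi * Complex.I * τ / 4))).congr fun n => (T2_eq τ n).symm

lemma summable_T3 {τ : ℂ} (hτ : 0 < τ.im) : Summable (T3 τ) :=
  ((summable_jacobiTheta₂_term_iff 0 τ).mpr hτ).congr fun n => (T3_eq τ n).symm

lemma summable_T4 {τ : ℂ} (hτ : 0 < τ.im) : Summable (T4 τ) :=
  ((summable_jacobiTheta₂_term_iff (1/2) τ).mpr hτ).congr fun n => (T4_eq τ n).symm

lemma summable_TS {τ : ℂ} (hτ : 0 < τ.im) : Summable (TS τ) :=
  (((summable_jacobiTheta₂_term_iff ((τ+1)/2) τ).mpr hτ).mul_left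
    (Complex.exp (Real.pi * Complex.I * τ / 4))).congr fun n => (TS_eq τ n).symm

lemma normSummable_term (z : ℂ) {τ : ℂ} (hτ : 0 < τ.im) :
    Summable fun n : ℤ => ‖jacobiTheta₂_term n z τ‖ :=
  (summable_pow_mul_jacobiTheta₂_term_bound |z.im| hτ 0).of_nonneg_of_le
    (fun n => norm_nonneg _)
    (fun n => by simpa only [pow_zero, one_mul] using
      norm_jacobiTheta₂_term_le hτ le_rfl le_rfl n)

lemma normSummable_T2 {τ : ℂ} (hτ : 0 < τ.im) : Summable fun n => ‖T2 τ n‖ :=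
  ((normSummable_term (τ/2) hτ).mul_left
    ‖Complex.exp (Real.pi * Complex.I * τ / 4)‖).congr
      fun n => by rw [T2_eq, norm_mul]

lemma normSummable_T3 {τ : ℂ} (hτ : 0 < τ.im) : Summable fun n => ‖T3 τ n‖ :=
  (normSummable_term 0 hτ).congr fun n => by rw [T3_eq]

lemma normSummable_T4 {τ : ℂ} (hτ : 0 < τ.im) : Summable fun n => ‖T4 τ n‖ :=
  (normSummable_term (1/2) hτ).congr fun n => by rw [T4_eq]

lemma normSummable_TS {τ : ℂ} (hτ : 0 < τ.im) : Summable fun n => ‖TS τ n‖ :=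
  ((normSummable_term ((τ+1)/2) hτ).mul_left
    ‖Complex.exp (Real.pi * Complex.I * τ / 4)‖).congr
      fun n => by rw [TS_eq, norm_mul]

lemma hasSum_T2 {τ : ℂ} (hτ : 0 < τ.im) : HasSum (T2 τ) (θ₂ τ) :=
  (summable_T2 hτ).hasSum

lemma hasSum_T3 {τ : ℂ} (hτ : 0 < τ.im) : HasSum (T3 τ) (θ₃ τ) :=
  (summable_T3 hτ).hasSum

lemma hasSum_T4 {τ : ℂ} (hτ : 0 < τ.im) : HasSum (T4 τ) (θ₄ τ) :=
  (summable_T4 hτ).hasSum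

lemma hasSum_TS {τ : ℂ} (hτ : 0 < τ.im) : HasSum (TS τ) 0 := by
  have h1 : HasSum (TS τ) (∑' n, TS τ n) := (summable_TS hτ).hasSum
  have h2 : HasSum ((TS τ) ∘ (Equiv.subLeft (-1 : ℤ))) (∑' n, TS τ n) :=
    (Equiv.subLeft (-1 : ℤ)).hasSum_iff.mpr h1
  have h3 : ((TS τ) ∘ (Equiv.subLeft (-1 : ℤ))) = fun j => - TS τ j := by
    funext j
    show TS τ (-1 - j) = - TS τ j
    rw [TS, TS]
    have hneg : -Complex.exp (Real.pi * Complex.I * τ * ((j : ℂ) + 1/2)^2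
        + Real.pi * Complex.I * (j : ℂ))
        = Complex.exp (Real.pi * Complex.I * τ * ((j : ℂ) + 1/2)^2
        + Real.pi * Complex.I * (j : ℂ) + Real.pi * Complex.I) := by
      conv_rhs => rw [Complex.exp_add]
      rw [Complex.exp_pi_mul_I]; ring
    rw [hneg, Complex.exp_eq_exp_iff_exists_int]
    exact ⟨-(j+1), by push_cast; ring⟩
  rw [h3] at h2
  have h4 : HasSum (fun j => - TS τ j) (-(∑' n, TS τ n)) := h1.neg
  have h5 := h2.unique h4
  have h6 : (∑' n, TS τ n) = 0 := by
    have : (2 : ℂ) * (∑' n, TS τ n) = 0 := by linear_combination h5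
    simpa using this
  rwa [h6] at h1

lemma prodHasSum {f g : ℤ → ℂ} {a b : ℂ} (hf : HasSum f a) (hg : HasSum g b)
    (hf' : Summable fun n => ‖f n‖) (hg' : Summable fun n => ‖g n‖) :
    HasSum (fun p : ℤ × ℤ => f p.1 * g p.2) (a * b) :=
  hf.mul hg (summable_mul_of_summable_norm hf' hg')

lemma hasSum_elim {α β : Type*} {f : α → ℂ} {g : β → ℂ} {a b : ℂ}
    (hf : HasSum f a) (hg : HasSum g b) : HasSum (Sum.elim f g) (a + b) := by
  classical
  have h1 : HasSum (Function.extend (Sum.inl : α → α ⊕ β) f 0) a :=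
    (hasSum_extend_zero Sum.inl_injective).mpr hf
  have h2 : HasSum (Function.extend (Sum.inr : β → α ⊕ β) g 0) b :=
    (hasSum_extend_zero Sum.inr_injective).mpr hg
  have e : Sum.elim f g
      = Function.extend (Sum.inl : α → α ⊕ β) f 0 + Function.extend Sum.inr g 0 := by
    funext x
    cases x with
    | inl x =>
      rw [Pi.add_apply, Sum.inl_injective.extend_apply,
        Function.extend_apply' _ _ _ (by simp), Sum.elim_inl, Pi.zero_apply, add_zero]
    | inr y =>
      rw [Pi.add_apply, Sum.inr_injective.extend_apply,
        Function.extend_apply' _ _ _ (by simp), Sum.elim_inr, Pi.zero_apply, zero_add]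
  rw [e]
  exact h1.add h2

/-- The bijection splitting `ℤ × ℤ` into pairs with even and odd coordinate sum. -/
def pairEquiv : (ℤ × ℤ) ⊕ (ℤ × ℤ) ≃ ℤ × ℤ where
  toFun := Sum.elim (fun p => (p.1 + p.2, p.1 - p.2)) (fun p => (p.1 + p.2 + 1, p.1 - p.2))
  invFun p := if (p.1 + p.2) % 2 = 0 then Sum.inl ((p.1 + p.2)/2, (p.1 - p.2)/2)
    else Sum.inr ((p.1 + p.2 - 1)/2, (p.1 - p.2 - 1)/2)
  left_inv x := by
    rcases x with ⟨j, k⟩ | ⟨j, k⟩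
    · simp only [Sum.elim_inl]
      simp only [show (j + k + (j - k)) % 2 = 0 by omega, ↓reduceIte]
      have h1 : (j + k + (j - k)) / 2 = j := by omega
      have h2 : (j + k - (j - k)) / 2 = k := by omega
      rw [h1, h2]
    · simp only [Sum.elim_inr]
      simp only [show ¬ ((j + k + 1 + (j - k)) % 2 = 0) by omega, ↓reduceIte]
      have h1 : (j + k + 1 + (j - k) - 1) / 2 = j := by omega
      have h2 : (j + k + 1 - (j - k) - 1) / 2 = k := by omega
      rw [h1, h2]
  right_inv p := by
    rcases p with ⟨m, n⟩
    dsimp only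
    by_cases h : (m + n) % 2 = 0
    · rw [if_pos h]
      simp only [Sum.elim_inl]
      have h1 : (m + n) / 2 + (m - n) / 2 = m := by omega
      have h2 : (m + n) / 2 - (m - n) / 2 = n := by omega
      rw [h1, h2]
    · rw [if_neg h]
      simp only [Sum.elim_inr]
      have h1 : (m + n - 1) / 2 + (m - n - 1) / 2 + 1 = m := by omega
      have h2 : (m + n - 1) / 2 - (m - n - 1) / 2 = n := by omega
      rw [h1, h2]

lemma hasSum_split {F G H : ℤ × ℤ → ℂ} {a b c : ℂ} (hF : HasSum F c)
    (hG : HasSum G a) (hH : HasSum H b)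
    (hl : ∀ p : ℤ × ℤ, G p = F (p.1 + p.2, p.1 - p.2))
    (hr : ∀ p : ℤ × ℤ, H p = F (p.1 + p.2 + 1, p.1 - p.2)) : c = a + b := by
  have h1 := hasSum_elim hG hH
  have h2 : Sum.elim G H = F ∘ pairEquiv := by
    funext x
    rcases x with ⟨j, k⟩ | ⟨j, k⟩
    · exact hl (j, k)
    · exact hr (j, k)
  rw [h2] at h1
  exact hF.unique (pairEquiv.hasSum_iff.mp h1)

lemma im_two_mul (τ : ℂ) : (2 * τ).im = 2 * τ.im := by
  simp [Complex.mul_im]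

lemma dup3 {τ : ℂ} (hτ : 0 < τ.im) : θ₃ τ ^ 2 = θ₃ (2*τ) ^ 2 + θ₂ (2*τ) ^ 2 := by
  have h2 : 0 < (2*τ).im := by rw [im_two_mul]; linarith
  have HF : HasSum (fun p : ℤ × ℤ => T3 τ p.1 * T3 τ p.2) (θ₃ τ * θ₃ τ) :=
    prodHasSum (hasSum_T3 hτ) (hasSum_T3 hτ) (normSummable_T3 hτ) (normSummable_T3 hτ)
  have HL : HasSum (fun p : ℤ × ℤ => T3 (2*τ) p.1 * T3 (2*τ) p.2) (θ₃ (2*τ) * θ₃ (2*τ)) :=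
    prodHasSum (hasSum_T3 h2) (hasSum_T3 h2) (normSummable_T3 h2) (normSummable_T3 h2)
  have HR : HasSum (fun p : ℤ × ℤ => T2 (2*τ) p.1 * T2 (2*τ) p.2) (θ₂ (2*τ) * θ₂ (2*τ)) :=
    prodHasSum (hasSum_T2 h2) (hasSum_T2 h2) (normSummable_T2 h2) (normSummable_T2 h2)
  have hl : ∀ p : ℤ × ℤ, T3 (2*τ) p.1 * T3 (2*τ) p.2
      = T3 τ (p.1 + p.2) * T3 τ (p.1 - p.2) := by
    intro p
    rw [T3, T3, T3, T3, ← Complex.exp_add, ← Complex.exp_add]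
    congr 1; push_cast; ring
  have hr : ∀ p : ℤ × ℤ, T2 (2*τ) p.1 * T2 (2*τ) p.2
      = T3 τ (p.1 + p.2 + 1) * T3 τ (p.1 - p.2) := by
    intro p
    rw [T2, T2, T3, T3, ← Complex.exp_add, ← Complex.exp_add]
    congr 1; push_cast; ring
  have key := hasSum_split HF HL HR hl hr
  rw [sq, sq, sq]; rw [key]

set_option maxHeartbeats 1000000 in
lemma dup2 {τ : ℂ} (hτ : 0 < τ.im) : θ₂ τ ^ 2 = 2 * (θ₂ (2*τ) * θ₃ (2*τ)) := by
  have h2 : 0 < (2*τ).im := by rw [im_two_mul]; linarith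
  have HF : HasSum (fun p : ℤ × ℤ => T2 τ p.1 * T2 τ p.2) (θ₂ τ * θ₂ τ) :=
    prodHasSum (hasSum_T2 hτ) (hasSum_T2 hτ) (normSummable_T2 hτ) (normSummable_T2 hτ)
  have HL : HasSum (fun p : ℤ × ℤ => T2 (2*τ) p.1 * T3 (2*τ) p.2) (θ₂ (2*τ) * θ₃ (2*τ)) :=
    prodHasSum (hasSum_T2 h2) (hasSum_T3 h2) (normSummable_T2 h2) (normSummable_T3 h2)
  -- the shifted sum: j ↦ j+1 in the θ₃ factor
  have hshift : HasSum (fun j : ℤ => T3 (2*τ) (j + 1)) (θ₃ (2*τ)) := by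
    have := ((Equiv.addRight (1 : ℤ)).hasSum_iff (f := T3 (2*τ))).mpr (hasSum_T3 h2)
    simpa [Function.comp_def] using this
  have hshift' : Summable fun j : ℤ => ‖T3 (2*τ) (j + 1)‖ :=
    (normSummable_T3 h2).comp_injective (add_left_injective (1 : ℤ))
  have HR : HasSum (fun p : ℤ × ℤ => T3 (2*τ) (p.1 + 1) * T2 (2*τ) p.2)
      (θ₃ (2*τ) * θ₂ (2*τ)) :=
    prodHasSum (f := fun j : ℤ => T3 (2*τ) (j + 1)) (g := T2 (2*τ)) hshift (hasSum_T2 h2)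
      hshift' (normSummable_T2 h2)
  have hl : ∀ p : ℤ × ℤ, T2 (2*τ) p.1 * T3 (2*τ) p.2
      = T2 τ (p.1 + p.2) * T2 τ (p.1 - p.2) := by
    intro p
    rw [T2, T3, T2, T2, ← Complex.exp_add, ← Complex.exp_add]
    congr 1; push_cast; ring
  have hr : ∀ p : ℤ × ℤ, T3 (2*τ) (p.1 + 1) * T2 (2*τ) p.2
      = T2 τ (p.1 + p.2 + 1) * T2 τ (p.1 - p.2) := by
    intro p
    rw [T3, T2, T2, T2, ← Complex.exp_add, ← Complex.exp_add]
    congr 1; push_cast; ring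
  have key := hasSum_split HF HL HR hl hr
  rw [sq]; rw [key]; ring

lemma dup4 {τ : ℂ} (hτ : 0 < τ.im) : θ₄ (2*τ) ^ 2 = θ₃ τ * θ₄ τ := by
  have h2 : 0 < (2*τ).im := by rw [im_two_mul]; linarith
  have HF : HasSum (fun p : ℤ × ℤ => T3 τ p.1 * T4 τ p.2) (θ₃ τ * θ₄ τ) :=
    prodHasSum (hasSum_T3 hτ) (hasSum_T4 hτ) (normSummable_T3 hτ) (normSummable_T4 hτ)
  have HL : HasSum (fun p : ℤ × ℤ => T4 (2*τ) p.1 * T4 (2*τ) p.2) (θ₄ (2*τ) * θ₄ (2*τ)) :=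
    prodHasSum (hasSum_T4 h2) (hasSum_T4 h2) (normSummable_T4 h2) (normSummable_T4 h2)
  have HR : HasSum (fun p : ℤ × ℤ => TS (2*τ) p.1 * TS (2*τ) p.2) ((0 : ℂ) * (0 : ℂ)) :=
    prodHasSum (hasSum_TS h2) (hasSum_TS h2) (normSummable_TS h2) (normSummable_TS h2)
  have hl : ∀ p : ℤ × ℤ, T4 (2*τ) p.1 * T4 (2*τ) p.2
      = T3 τ (p.1 + p.2) * T4 τ (p.1 - p.2) := by
    intro p
    rw [T4, T4, T3, T4, ← Complex.exp_add, ← Complex.exp_add,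
      Complex.exp_eq_exp_iff_exists_int]
    exact ⟨p.2, by push_cast; ring⟩
  have hr : ∀ p : ℤ × ℤ, TS (2*τ) p.1 * TS (2*τ) p.2
      = T3 τ (p.1 + p.2 + 1) * T4 τ (p.1 - p.2) := by
    intro p
    rw [TS, TS, T3, T4, ← Complex.exp_add, ← Complex.exp_add,
      Complex.exp_eq_exp_iff_exists_int]
    exact ⟨p.2, by push_cast; ring⟩
  have key := hasSum_split HF HL HR hl hr
  rw [mul_zero, add_zero] at key
  rw [sq, ← key]

lemma norm_T4 {τ : ℂ} (n : ℤ) : ‖T4 τ n‖ = Real.exp (-Real.pi * n^2 * τ.im) := by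
  rw [T4_eq, norm_jacobiTheta₂_term]
  norm_num

lemma θ₄_ne_zero_of_one_le {τ : ℂ} (h1 : 1 ≤ τ.im) : θ₄ τ ≠ 0 := by
  have hτ : 0 < τ.im := lt_of_lt_of_le one_pos h1
  set r : ℝ := Real.exp (-Real.pi) with hrdef
  have hr0 : 0 ≤ r := (Real.exp_pos _).le
  have h4 : (3:ℝ) < Real.exp Real.pi :=
    lt_of_lt_of_le (by linarith [Real.add_one_le_exp (3:ℝ)])
      (Real.exp_le_exp.mpr Real.pi_gt_three.le)
  have hr13 : r < 1/3 := by
    have hp : (0:ℝ) < Real.exp Real.pi := Real.exp_pos _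
    have : r * Real.exp Real.pi = 1 := by
      rw [hrdef, ← Real.exp_add]; simp
    nlinarith
  have hr1 : r < 1 := by linarith
  set v : ℤ → ℝ := fun n => if n = 0 then 0 else r ^ n.natAbs with hvdef
  have hgeo : HasSum (fun n : ℕ => r ^ n) (1 - r)⁻¹ := hasSum_geometric_of_lt_one hr0 hr1
  have hA : HasSum (fun n : ℕ => v (n : ℤ)) ((1 - r)⁻¹ - 1) := by
    have h0 : HasSum (fun n : ℕ => if n = 0 then (1:ℝ) else 0) 1 := hasSum_ite_eq 0 1
    have h := hgeo.sub h0
    have e : (fun n : ℕ => r ^ n - if n = 0 then (1:ℝ) else 0) = fun n : ℕ => v (n : ℤ) := by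
      funext m
      rcases eq_or_ne m 0 with rfl | hm
      · simp [hvdef]
      · simp [hvdef, hm, Int.natCast_eq_zero]
    rwa [e] at h
  have hB : HasSum (fun n : ℕ => v (-((n : ℤ) + 1))) ((1 - r)⁻¹ * r) := by
    have h := hgeo.mul_right r
    have e : (fun n : ℕ => r ^ n * r) = fun n : ℕ => v (-((n : ℤ) + 1)) := by
      funext m
      have h1' : (-((m : ℤ) + 1)) ≠ 0 := by omega
      have h2' : (-((m : ℤ) + 1)).natAbs = m + 1 := by omega
      simp only [hvdef]
      rw [if_neg h1', h2', pow_succ]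
    rwa [e] at h
  have hv : HasSum v ((1 - r)⁻¹ - 1 + (1 - r)⁻¹ * r) := HasSum.of_nat_of_neg_add_one hA hB
  have hBlt : (1 - r)⁻¹ - 1 + (1 - r)⁻¹ * r < 1 := by
    have h3 : 0 < 1 - r := by linarith
    have hu : (1 - r)⁻¹ * (1 - r) = 1 := inv_mul_cancel₀ h3.ne'
    nlinarith [inv_pos.mpr h3]
  have hsum := hasSum_T4 hτ
  have h0 : T4 τ 0 = 1 := by
    rw [T4]
    norm_num
  have hupd : HasSum (Function.update (T4 τ) 0 0) (θ₄ τ - 1) := by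
    have h := hsum.update 0 0
    rw [h0] at h
    have e : (0:ℂ) - 1 + θ₄ τ = θ₄ τ - 1 := by ring
    rwa [e] at h
  have hpt : ∀ n : ℤ, ‖Function.update (T4 τ) 0 0 n‖ ≤ v n := by
    intro n
    rcases eq_or_ne n 0 with rfl | hn
    · simp [hvdef]
    · rw [Function.update_of_ne hn, norm_T4]
      simp only [hvdef]
      rw [if_neg hn, ← Real.exp_nat_mul]
      apply Real.exp_le_exp.mpr
      have hab : ((n.natAbs : ℝ)) = |(n : ℝ)| := by
        rw [Nat.cast_natAbs]; push_cast; ring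
      have h1' : (1:ℝ) ≤ |(n : ℝ)| := by
        have : (1:ℤ) ≤ |n| := Int.one_le_abs hn
        calc (1:ℝ) ≤ ((|n| : ℤ) : ℝ) := by exact_mod_cast this
          _ = |(n : ℝ)| := by push_cast; ring
      have hsq : ((n:ℝ))^2 = |(n:ℝ)|^2 := (_root_.sq_abs _).symm
      rw [hab]
      have key : |(n:ℝ)| ≤ (n:ℝ)^2 * τ.im := by nlinarith [sq_nonneg ((n:ℝ))]
      have := mul_le_mul_of_nonneg_left key Real.pi_pos.le
      linarith
  have hsummL : Summable fun n : ℤ => ‖Function.update (T4 τ) 0 0 n‖ :=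
    hv.summable.of_nonneg_of_le (fun n => norm_nonneg _) hpt
  have hle : ‖θ₄ τ - 1‖ ≤ (1 - r)⁻¹ - 1 + (1 - r)⁻¹ * r := by
    calc ‖θ₄ τ - 1‖ = ‖∑' n : ℤ, Function.update (T4 τ) 0 0 n‖ := by rw [hupd.tsum_eq]
      _ ≤ ∑' n : ℤ, ‖Function.update (T4 τ) 0 0 n‖ := norm_tsum_le_tsum_norm hsummL
      _ ≤ ∑' n : ℤ, v n := Summable.tsum_le_tsum hpt hsummL hv.summable
      _ = (1 - r)⁻¹ - 1 + (1 - r)⁻¹ * r := hv.tsum_eq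
  intro hzero
  rw [hzero] at hle
  simp only [zero_sub, norm_neg, norm_one] at hle
  linarith

lemma θ₄_ne_zero {τ : ℂ} (hτ : 0 < τ.im) : θ₄ τ ≠ 0 := by
  have key : ∀ k : ℕ, ∀ σ : ℂ, 0 < σ.im → 1 ≤ 2 ^ k * σ.im → θ₄ σ ≠ 0 := by
    intro k
    induction k with
    | zero => intro σ h h1; exact θ₄_ne_zero_of_one_le (by simpa using h1)
    | succ k ih =>
      intro σ h h1 hzero
      have h2 : 0 < (2*σ).im := by rw [im_two_mul]; linarith
      have hd := dup4 h
      rw [hzero, mul_zero] at hd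
      have hz2 : θ₄ (2*σ) = 0 := by
        have := sq_eq_zero_iff.mp hd
        exact this
      refine ih (2*σ) h2 ?_ hz2
      rw [im_two_mul]
      have e : (2:ℝ)^k * (2 * σ.im) = 2^(k+1) * σ.im := by ring
      rw [e]; exact h1
  obtain ⟨k, hk⟩ := pow_unbounded_of_one_lt (1 / τ.im) (one_lt_two (α := ℝ))
  refine key k τ hτ ?_
  rw [div_lt_iff₀ hτ] at hk
  linarith

lemma θ₃_ne_zero {τ : ℂ} (hτ : 0 < τ.im) : θ₃ τ ≠ 0 := by
  have h2 : 0 < (2*τ).im := by rw [im_two_mul]; linarith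
  intro h
  have hd := dup4 hτ
  rw [h, zero_mul] at hd
  exact pow_ne_zero 2 (θ₄_ne_zero h2) hd

lemma θ₂_eq (τ : ℂ) :
    θ₂ τ = Complex.exp (Real.pi * Complex.I * τ / 4) * jacobiTheta₂ (τ/2) τ := by
  have h1 : θ₂ τ = ∑' n : ℤ, T2 τ n := rfl
  have h2 : jacobiTheta₂ (τ/2) τ = ∑' n : ℤ, jacobiTheta₂_term n (τ/2) τ := rfl
  rw [h1, h2, tsum_congr (T2_eq τ), tsum_mul_left]

lemma θ₄_eq (τ : ℂ) : θ₄ τ = jacobiTheta₂ (1/2) τ := by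
  have h2 : jacobiTheta₂ ((1:ℂ)/2) τ = ∑' n : ℤ, jacobiTheta₂_term n (1/2) τ := rfl
  rw [θ₄, h2]
  exact tsum_congr (T4_eq τ)

lemma θ₂_ne_zero {τ : ℂ} (hτ : 0 < τ.im) : θ₂ τ ≠ 0 := by
  have hτ0 : τ ≠ 0 := by
    intro h; rw [h] at hτ; simp at hτ
  have hinv : 0 < (-1/τ).im := by
    rw [neg_div, neg_im, one_div, Complex.inv_im, neg_div, neg_neg]
    exact div_pos hτ (Complex.normSq_pos.mpr hτ0)
  have hfe := jacobiTheta₂_functional_equation (τ/2) τ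
  have hz : (τ/2)/τ = 1/2 := by field_simp
  rw [hz] at hfe
  rw [θ₂_eq τ, hfe, ← θ₄_eq]
  have hx : (-I*τ) ≠ 0 := mul_ne_zero (by simp [I_ne_zero]) hτ0
  refine mul_ne_zero (Complex.exp_ne_zero _)
    (mul_ne_zero (mul_ne_zero ?_ (Complex.exp_ne_zero _)) (θ₄_ne_zero hinv))
  rw [Ne, div_eq_zero_iff]
  simp [Complex.cpow_eq_zero_iff, hx, hτ0]

lemma key_alg {σ : ℂ} (hσ : 0 < σ.im) :
    (2 * θ₃ σ / θ₂ σ) ^ 2 * (2 * θ₃ (2*σ) / θ₂ (2*σ))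
      = (2 * θ₃ (2*σ) / θ₂ (2*σ)) ^ 2 + 4 := by
  have h2σ : 0 < (2*σ).im := by rw [im_two_mul]; linarith
  have hc := dup2 hσ
  have hd := dup3 hσ
  have ha : θ₂ (2*σ) ≠ 0 := θ₂_ne_zero h2σ
  have hcne : θ₂ σ ≠ 0 := θ₂_ne_zero hσ
  set a := θ₂ (2*σ) with ha'
  set b := θ₃ (2*σ) with hb'
  set c := θ₂ σ with hc'
  set d := θ₃ σ with hd'
  field_simp
  linear_combination (8 * b * a) * hd - (4 * b^2 + 4 * a^2) * hc

end ThetaAux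

theorem x_recursion (n : ℕ) (hn : 2 ≤ n) (τ : ℂ) (hτ : 0 < τ.im) :
    xfun (n - 1) τ ^ 2 * xfun n τ = xfun n τ ^ 2 + 4 := by
  have hm : n - 1 - 1 = n - 2 := by omega
  have hm2 : n - 1 = (n - 2) + 1 := by omega
  have hσ : 0 < ((2:ℂ)^(n-2) * τ).im := by
    have h : ∀ k : ℕ, 0 < ((2:ℂ)^k * τ).im := by
      intro k
      induction k with
      | zero => simpa using hτ
      | succ k ih =>
        have e : (2:ℂ)^(k+1) * τ = 2 * ((2:ℂ)^k * τ) := by ring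
        rw [e, im_two_mul]; linarith
    exact h (n-2)
  have hpow1 : (2:ℂ)^(n-1) * τ = 2 * ((2:ℂ)^(n-2) * τ) := by
    rw [hm2, pow_succ, mul_comm ((2:ℂ)^(n-2)) 2, mul_assoc]
  have hxn : xfun n τ = 2 * θ₃ (2 * ((2:ℂ)^(n-2) * τ)) / θ₂ (2 * ((2:ℂ)^(n-2) * τ)) := by
    rw [xfun, hpow1]
  have hxn1 : xfun (n-1) τ = 2 * θ₃ ((2:ℂ)^(n-2) * τ) / θ₂ ((2:ℂ)^(n-2) * τ) := by
    rw [xfun, hm]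
  rw [hxn, hxn1]
  exact key_alg hσ
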